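/- If A is a k-wise eventown on [n], then A contains a subfamily A' with |A'| ≥ |A| − (k−1)n such that A' is a strong k-wise eventown. -/

import Mathlib

open Finset

private def chiv {n : ℕ} (S : Finset (Fin n)) : Fin n → ZMod 2 :=
  fun x => if x ∈ S then 1 else 0

private def dotp {n : ℕ} (a b : Fin n → ZMod 2) : ZMod 2 := ∑ x, a x * b x

private lemma dotp_chiv {n : ℕ} (S T : Finset (Fin n)) :
    dotp (chiv S) (chiv T) = ((S ∩ T).card : ZMod 2) := by
  unfold dotp chiv
  have : ∀ x : Fin n, (if x ∈ S then (1 : ZMod 2) else 0) * (if x ∈ T then (1 : ZMod 2) else 0)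
      = if x ∈ S ∩ T then 1 else 0 := by
    intro x
    by_cases hS : x ∈ S <;> by_cases hT : x ∈ T <;> simp [hS, hT]
  rw [Finset.sum_congr rfl fun x _ => this x, Finset.sum_ite_mem, Finset.univ_inter,
    Finset.sum_const, Finset.card_eq_sum_ones (S ∩ T)]
  push_cast
  simp

private lemma cast_even {m : ℕ} (h : Even m) : (m : ZMod 2) = 0 := by
  obtain ⟨r, rfl⟩ := h
  have : ((r + r : ℕ) : ZMod 2) = 2 * (r : ZMod 2) := by push_cast; ring
  rw [this, show ((2 : ZMod 2)) = 0 from rfl, zero_mul]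

private lemma cast_odd {m : ℕ} (h : Odd m) : (m : ZMod 2) = 1 := by
  obtain ⟨r, rfl⟩ := h
  push_cast
  rw [show ((2 : ZMod 2)) = 0 from rfl]
  ring

private lemma skew_bound {n m : ℕ} (v w : Fin m → Fin n → ZMod 2)
    (h1 : ∀ i, dotp (v i) (w i) = 1)
    (h2 : ∀ i j : Fin m, i < j → dotp (v i) (w j) = 0) : m ≤ n := by
  have hli : LinearIndependent (ZMod 2) v := by
    rw [Fintype.linearIndependent_iff]
    intro g hg
    have key : ∀ t : ℕ, ∀ j : Fin m, m - j.val ≤ t → g j = 0 := by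
      intro t
      induction t with
      | zero => intro j hj; exact absurd hj (by have := j.isLt; omega)
      | succ t ih =>
        intro j hj
        have hgt : ∀ i : Fin m, j < i → g i = 0 := by
          intro i hi
          exact ih i (by have := i.isLt; have : j.val < i.val := hi; omega)
        have expand : dotp (∑ i, g i • v i) (w j) = ∑ i, g i * dotp (v i) (w j) := by
          unfold dotp
          simp only [Finset.sum_apply, Pi.smul_apply, smul_eq_mul, Finset.sum_mul]
          rw [Finset.sum_comm]
          refine Finset.sum_congr rfl fun i _ => ?_
          rw [Finset.mul_sum]
          refine Finset.sum_congr rfl fun x _ => ?_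
          ring
        have h0 : ∑ i, g i * dotp (v i) (w j) = 0 := by
          rw [← expand, hg]
          unfold dotp
          simp
        rw [Finset.sum_eq_single_of_mem j (Finset.mem_univ j)] at h0
        · rw [h1 j, mul_one] at h0; exact h0
        · intro i _ hij
          rcases lt_or_gt_of_ne hij with hlt | hgt'
          · rw [h2 i j hlt, mul_zero]
          · rw [hgt i hgt', zero_mul]
    intro j
    exact key (m - j.val) j le_rfl
  have := hli.fintype_card_le_finrank
  simpa [Module.finrank_fintype_fun_eq_card] using this

private lemma remove_lemma {n k : ℕ} (𝒜 : Finset (Finset (Fin n)))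
    (h : ∀ S : Finset (Finset (Fin n)), S ⊆ 𝒜 → S.card = k → Even (S.inf id).card) :
    ∀ N (A : Finset (Finset (Fin n))), A.card ≤ N → A ⊆ 𝒜 →
    ∃ (A' : Finset (Finset (Fin n))) (L : List ((Fin n → ZMod 2) × Finset (Fin n))),
      A' ⊆ A ∧
      A.card ≤ A'.card + L.length * (k - 1) ∧
      (∀ S ⊆ A', 1 ≤ S.card → S.card ≤ k - 1 → Even (S.inf id).card) ∧
      (∀ p ∈ L, p.2 ∈ A) ∧
      (∀ p ∈ L, dotp p.1 (chiv p.2) = 1) ∧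
      L.Pairwise (fun p q => dotp p.1 (chiv q.2) = 0) := by
  intro N
  induction N with
  | zero =>
    intro A hA _
    have : A = ∅ := Finset.card_eq_zero.mp (Nat.le_zero.mp hA)
    subst this
    refine ⟨∅, [], Finset.Subset.refl _, by simp, ?_, by simp, by simp, by simp⟩
    intro S hS h1 _
    have : S = ∅ := Finset.subset_empty.mp hS
    simp [this] at h1
  | succ N ih =>
    intro A hA hA𝒜
    by_cases hbad : ∀ S ⊆ A, 1 ≤ S.card → S.card ≤ k - 1 → Even (S.inf id).card
    · exact ⟨A, [], Finset.Subset.refl _, by simp, hbad, by simp, by simp, by simp⟩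
    · push_neg at hbad
      obtain ⟨S₀, hS₀A, hS₀1, hS₀k, hS₀odd⟩ := hbad
      set V := A.powerset.filter
        (fun S => 1 ≤ S.card ∧ S.card ≤ k - 1 ∧ ¬ Even (S.inf id).card) with hV
      have hVne : V.Nonempty :=
        ⟨S₀, by simp only [hV, Finset.mem_filter, Finset.mem_powerset]; exact ⟨hS₀A, hS₀1, hS₀k, hS₀odd⟩⟩
      obtain ⟨S, hSV, hSmax⟩ := V.exists_max_image Finset.card hVne
      rw [hV, Finset.mem_filter, Finset.mem_powerset] at hSV
      obtain ⟨hSA, hS1, hSk, hSodd⟩ := hSV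
      have hSodd' : Odd (S.inf id).card := Nat.not_even_iff_odd.mp hSodd
      have hSne : S.Nonempty := Finset.card_pos.mp hS1
      obtain ⟨B, hB⟩ := hSne
      have hk2 : 2 ≤ k := by omega
      set A₂ := A \ S with hA₂
      have hcards : A₂.card + S.card = A.card := Finset.card_sdiff_add_card_eq_card hSA
      have hcard2 : A₂.card ≤ N := by omega
      obtain ⟨A', L, hsub, hbound, hfree, hmem, hdiag, hpair⟩ :=
        ih A₂ hcard2 ((Finset.sdiff_subset).trans hA𝒜)
      -- the key skew property
      have hskew : ∀ B' ∈ A₂, dotp (chiv (S.inf id)) (chiv B') = 0 := by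
        intro B' hB'
        rw [Finset.mem_sdiff] at hB'
        obtain ⟨hB'A, hB'S⟩ := hB'
        have hTsub : insert B' S ⊆ A := Finset.insert_subset hB'A hSA
        have hTcard : (insert B' S).card = S.card + 1 := Finset.card_insert_of_notMem hB'S
        have hTinf : (insert B' S).inf id = B' ∩ S.inf id := by
          rw [Finset.inf_insert]; rfl
        have hEven : Even ((insert B' S).inf id).card := by
          rcases eq_or_lt_of_le (show S.card + 1 ≤ k by omega) with heq | hlt
          · exact h _ (hTsub.trans hA𝒜) (by omega)
          · by_contra hodd
            have hmem' : insert B' S ∈ V := by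
              rw [hV, Finset.mem_filter, Finset.mem_powerset]
              exact ⟨hTsub, by omega, by omega, hodd⟩
            have := hSmax _ hmem'
            omega
        rw [dotp_chiv]
        rw [hTinf] at hEven
        rw [Finset.inter_comm] at hEven
        exact cast_even hEven
      refine ⟨A', (chiv (S.inf id), B) :: L, hsub.trans Finset.sdiff_subset, ?_, hfree, ?_, ?_, ?_⟩
      · simp only [List.length_cons]
        have hmul : (L.length + 1) * (k - 1) = L.length * (k - 1) + (k - 1) := by ring
        rw [hmul]
        have hSk' : S.card ≤ k - 1 := hSk
        omega
      · intro p hp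
        rcases List.mem_cons.mp hp with rfl | hp'
        · exact hSA hB
        · exact Finset.sdiff_subset (hmem p hp')
      · intro p hp
        rcases List.mem_cons.mp hp with rfl | hp'
        · show dotp (chiv (S.inf id)) (chiv B) = 1
          rw [dotp_chiv]
          have hle : S.inf id ⊆ B := Finset.le_iff_subset.mp (Finset.inf_le hB)
          rw [Finset.inter_eq_left.mpr hle]
          exact cast_odd hSodd'
        · exact hdiag p hp'
      · rw [List.pairwise_cons]
        exact ⟨fun q hq => hskew q.2 (hmem q hq), hpair⟩

/-- Every k-wise eventown contains a strong k-wise eventown of size at least |𝒜| - (k-1)n. -/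
theorem kwise_contains_strong (n k : ℕ) (𝒜 : Finset (Finset (Fin n)))
    (h : ∀ S : Finset (Finset (Fin n)), S ⊆ 𝒜 → S.card = k → Even (S.inf id).card) :
    ∃ 𝒜' : Finset (Finset (Fin n)), 𝒜' ⊆ 𝒜 ∧
      𝒜.card ≤ 𝒜'.card + (k - 1) * n ∧
      (∀ k', 1 ≤ k' → k' ≤ k → ∀ S : Finset (Finset (Fin n)), S ⊆ 𝒜' →
        S.card = k' → Even (S.inf id).card) := by
  obtain ⟨A', L, hsub, hbound, hfree, hmem, hdiag, hpair⟩ :=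
    remove_lemma 𝒜 h 𝒜.card 𝒜 le_rfl (Finset.Subset.refl _)
  have hlen : L.length ≤ n := by
    apply skew_bound (fun i : Fin L.length => (L.get i).1) (fun i => chiv (L.get i).2)
    · intro i; exact hdiag _ (L.get_mem i)
    · intro i j hij
      exact List.pairwise_iff_get.mp hpair i j hij
  refine ⟨A', hsub, ?_, ?_⟩
  · calc 𝒜.card ≤ A'.card + L.length * (k - 1) := hbound
      _ ≤ A'.card + n * (k - 1) := by
          exact Nat.add_le_add_left (Nat.mul_le_mul_right _ hlen) _
      _ = A'.card + (k - 1) * n := by rw [Nat.mul_comm]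
  · intro k' hk1 hkk S hS hcard
    rcases eq_or_lt_of_le hkk with rfl | hlt
    · exact h S (hS.trans hsub) hcard
    · exact hfree S hS (by omega) (by omega)
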